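/- Let μ > 0, ν > 0 and 0 < p < 1 be real numbers, and for natural numbers y define a_y := μ^(νy) / ((1−p)^y · (y!)^ν). Then for every natural number y, the two neighbour inequalities a_y ≥ a_{y+1} and (in case y ≥ 1) a_y ≥ a_{y−1} both hold if and only if μ/(1−p)^(1/ν) − 1 ≤ y ≤ μ/(1−p)^(1/ν). -/

import Mathlib

/-- For `μ > 0`, `ν > 0`, `0 < p < 1` and
`a_y := μ^(νy) / ((1−p)^y · (y!)^ν)`, for every natural `y` the two neighbour
inequalities `a_y ≥ a_{y+1}` and (if `y ≥ 1`) `a_y ≥ a_{y−1}` both hold iff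
`μ/(1−p)^(1/ν) − 1 ≤ y ≤ μ/(1−p)^(1/ν)`. -/
theorem stmt_4 (μ ν p : ℝ) (hμ : 0 < μ) (hν : 0 < ν) (hp0 : 0 < p) (hp1 : p < 1)
    (a : ℕ → ℝ)
    (ha : ∀ y : ℕ, a y = μ ^ (ν * (y : ℝ)) / ((1 - p) ^ y * (Nat.factorial y : ℝ) ^ ν))
    (y : ℕ) :
    (a y ≥ a (y + 1) ∧ (1 ≤ y → a y ≥ a (y - 1))) ↔
      (μ / (1 - p) ^ (1 / ν) - 1 ≤ (y : ℝ) ∧ (y : ℝ) ≤ μ / (1 - p) ^ (1 / ν)) := by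
  have hq : 0 < 1 - p := by linarith
  set c := (1 - p) ^ (1 / ν) with hc_def
  have hc : 0 < c := Real.rpow_pos_of_pos hq _
  have hpos : ∀ z : ℕ, 0 < a z := by
    intro z
    rw [ha]
    have hf : 0 < (Nat.factorial z : ℝ) := by exact_mod_cast (Nat.factorial_pos z)
    positivity
  have step : ∀ z : ℕ, a (z + 1) = a z * (μ ^ ν / ((1 - p) * ((z : ℝ) + 1) ^ ν)) := by
    intro z
    rw [ha, ha]
    have h1 : μ ^ (ν * ((z + 1 : ℕ) : ℝ)) = μ ^ (ν * (z : ℝ)) * μ ^ ν := by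
      rw [← Real.rpow_add hμ]; push_cast; ring_nf
    have h2 : ((Nat.factorial (z + 1) : ℝ)) ^ ν
        = ((z : ℝ) + 1) ^ ν * (Nat.factorial z : ℝ) ^ ν := by
      rw [Nat.factorial_succ]
      push_cast
      rw [Real.mul_rpow (by positivity) (by positivity)]
    have hf : (0:ℝ) < (Nat.factorial z : ℝ) := by exact_mod_cast (Nat.factorial_pos z)
    have hf' : (0:ℝ) < (Nat.factorial z : ℝ) ^ ν := by positivity
    have hz1 : (0:ℝ) < ((z : ℝ) + 1) ^ ν := by positivity
    rw [h1, h2, pow_succ]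
    field_simp
  have eqkey : ∀ t : ℝ, 0 < t → (1 - p) * t ^ ν = (c * t) ^ ν := by
    intro t ht
    rw [Real.mul_rpow hc.le ht.le]
    congr 1
    rw [hc_def, ← Real.rpow_mul hq.le, one_div, inv_mul_cancel₀ hν.ne', Real.rpow_one]
  have key1 : ∀ t : ℝ, 0 < t → (μ ^ ν ≤ (1 - p) * t ^ ν ↔ μ ≤ c * t) := by
    intro t ht
    rw [eqkey t ht, Real.rpow_le_rpow_iff hμ.le (by positivity) hν]
  have key2 : ∀ t : ℝ, 0 < t → ((1 - p) * t ^ ν ≤ μ ^ ν ↔ c * t ≤ μ) := by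
    intro t ht
    rw [eqkey t ht, Real.rpow_le_rpow_iff (by positivity) hμ.le hν]
  have E1 : ∀ z : ℕ, (a (z + 1) ≤ a z ↔ μ ≤ c * ((z : ℝ) + 1)) := by
    intro z
    rw [step z, mul_le_iff_le_one_right (hpos z), div_le_one (by positivity)]
    exact key1 _ (by positivity)
  constructor
  · rintro ⟨h1, h2⟩
    refine ⟨?_, ?_⟩
    · rw [sub_le_iff_le_add, div_le_iff₀ hc, mul_comm]
      exact (E1 y).mp h1
    · rcases Nat.eq_zero_or_pos y with rfl | hy1
      · simp only [Nat.cast_zero]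
        positivity
      · obtain ⟨k, rfl⟩ : ∃ k, y = k + 1 := ⟨y - 1, (Nat.succ_pred_eq_of_pos hy1).symm⟩
        have hr := h2 hy1
        simp only [Nat.add_sub_cancel] at hr
        rw [ge_iff_le, step k, le_mul_iff_one_le_right (hpos k),
          one_le_div (by positivity)] at hr
        have h3 := (key2 _ (by positivity : (0:ℝ) < (k : ℝ) + 1)).mp hr
        rw [le_div_iff₀ hc, mul_comm]
        push_cast
        exact h3
  · rintro ⟨h1, h2⟩
    refine ⟨?_, ?_⟩
    · apply (E1 y).mpr
      rw [sub_le_iff_le_add, div_le_iff₀ hc, mul_comm] at h1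
      exact h1
    · intro hy1
      obtain ⟨k, rfl⟩ : ∃ k, y = k + 1 := ⟨y - 1, (Nat.succ_pred_eq_of_pos hy1).symm⟩
      rw [le_div_iff₀ hc, mul_comm] at h2
      push_cast at h2
      have hkey : (1 - p) * ((k : ℝ) + 1) ^ ν ≤ μ ^ ν :=
        (key2 _ (by positivity)).mpr h2
      simp only [Nat.add_sub_cancel]
      rw [ge_iff_le, step k, le_mul_iff_one_le_right (hpos k), one_le_div (by positivity)]
      exact hkey
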